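/- Let B_n be a random p×p positive semidefinite matrix (the SSCM), η_r > limsup ||Σ||(1+√c)² and suppose P(||B_n^{(0)}|| > η_r^{(0)}) = o(n^{-s}) for the Gaussian SCM B_n^{(0)} and exponential concentration of ||Az_j||²/p around r₁ holds. Then using the inequality ||B_n|| ≤ max_{1≤j≤n} (p/||Az_j||²) · ||B_n^{(0)}||, one has P(||B_n|| > η_r) = o(n^{-s}) for every s > 0. -/

import Mathlib

open MeasureTheory ProbabilityTheory Matrix Filter
open scoped InnerProductSpace

set_option maxHeartbeats 1000000
set_option synthInstance.maxHeartbeats 1000000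

section Aux

variable {m n : ℕ}

lemma aux_clm_apply (M : Matrix (Fin m) (Fin m) ℝ) (x : EuclideanSpace ℝ (Fin m)) (i : Fin m) :
    (Matrix.toEuclideanCLM (𝕜 := ℝ) M x) i = M.mulVec x i := by
  have h := Matrix.ofLp_toEuclideanCLM (𝕜 := ℝ) M x
  exact congrFun h i

lemma aux_inner (M : Matrix (Fin m) (Fin m) ℝ) (x : EuclideanSpace ℝ (Fin m)) :
    ⟪Matrix.toEuclideanCLM (𝕜 := ℝ) M x, x⟫_ℝ = ∑ i, M.mulVec x i * x i := by
  rw [PiLp.inner_apply]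
  refine Finset.sum_congr rfl fun i _ => ?_
  rw [aux_clm_apply]
  simp [RCLike.inner_apply, conj_trivial]
  ring

lemma aux_quad (v x : Fin m → ℝ) :
    ∑ i, (vecMulVec v v).mulVec x i * x i = (∑ i, v i * x i) ^ 2 := by
  simp only [Matrix.mulVec, dotProduct, Matrix.vecMulVec_apply, sq]
  rw [Finset.sum_mul]
  refine Finset.sum_congr rfl fun i _ => ?_
  rw [Finset.sum_mul, Finset.mul_sum]
  refine Finset.sum_congr rfl fun k _ => by ring

lemma aux_selfAdj (v : Fin n → (Fin m → ℝ)) (w : Fin n → ℝ) :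
    IsSelfAdjoint (∑ j, w j • vecMulVec (v j) (v j)) := by
  show star _ = _
  rw [Matrix.star_eq_conjTranspose]
  ext i k
  simp only [Matrix.conjTranspose_apply, Matrix.sum_apply, Matrix.smul_apply,
    Matrix.vecMulVec_apply, star_trivial, smul_eq_mul]
  exact Finset.sum_congr rfl fun j _ => by ring

lemma aux_sum_pos (v : Fin n → (Fin m → ℝ)) (w : Fin n → ℝ) (hw : ∀ j, 0 ≤ w j) :
    (Matrix.toEuclideanCLM (𝕜 := ℝ) (∑ j, w j • vecMulVec (v j) (v j))).IsPositive := by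
  constructor
  · exact ((aux_selfAdj v w).map (Matrix.toEuclideanCLM (𝕜 := ℝ))).isSymmetric
  · intro x
    rw [ContinuousLinearMap.reApplyInnerSelf_apply, aux_inner, RCLike.re_to_real]
    have : ∑ i, (∑ j, w j • vecMulVec (v j) (v j)).mulVec x i * x i
        = ∑ j, w j * (∑ i, v j i * x i) ^ 2 := by
      have hmv : ∀ i, (∑ j, w j • vecMulVec (v j) (v j)).mulVec x i
          = ∑ j, w j * ((vecMulVec (v j) (v j)).mulVec x i) := by
        intro i
        simp only [Matrix.mulVec, dotProduct, Matrix.sum_apply, Matrix.smul_apply,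
          smul_eq_mul, Finset.sum_mul, Finset.mul_sum]
        rw [Finset.sum_comm]
        exact Finset.sum_congr rfl fun j _ => Finset.sum_congr rfl fun k _ => by ring
      simp_rw [hmv, Finset.sum_mul]
      rw [Finset.sum_comm]
      refine Finset.sum_congr rfl fun j _ => ?_
      rw [← aux_quad (v j) x, Finset.mul_sum]
      exact Finset.sum_congr rfl fun i _ => by ring
    rw [this]
    exact Finset.sum_nonneg fun j _ => mul_nonneg (hw j) (sq_nonneg _)

lemma aux_norm_le {E : Type*} [NormedAddCommGroup E] [InnerProductSpace ℝ E] [CompleteSpace E]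
    {S T : E →L[ℝ] E} (hS : S.IsPositive) (hTS : (T - S).IsPositive) : ‖S‖ ≤ ‖T‖ := by
  have hpos : ∀ x, 0 ≤ ⟪S x, x⟫_ℝ := fun x => by
    have := hS.inner_nonneg_left x
    exact this
  have innSA : ∀ a b : E, ⟪S a, b⟫_ℝ = ⟪a, S b⟫_ℝ := by
    intro a b
    exact hS.1 a b
  have hCS : ∀ x y : E, ⟪S x, y⟫_ℝ ^ 2 ≤ ⟪S x, x⟫_ℝ * ⟪S y, y⟫_ℝ := by
    intro x y
    have hq : ∀ t : ℝ, 0 ≤ ⟪S y, y⟫_ℝ * (t * t) + (2 * ⟪S x, y⟫_ℝ) * t + ⟪S x, x⟫_ℝ := by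
      intro t
      have h0 := hpos (x + t • y)
      have hc : ⟪S y, x⟫_ℝ = ⟪S x, y⟫_ℝ := by
        rw [real_inner_comm, innSA]
      rw [map_add, _root_.map_smul, inner_add_left, inner_add_right, inner_add_right,
        real_inner_smul_left, real_inner_smul_left, real_inner_smul_right,
        real_inner_smul_right, hc] at h0
      nlinarith [h0]
    have hd := discrim_le_zero hq
    rw [discrim] at hd
    nlinarith [hd]
  have hq2 : ∀ x : E, ⟪S x, x⟫_ℝ ≤ ‖T‖ * ‖x‖ ^ 2 := by
    intro x
    have h1 : 0 ≤ ⟪T x - S x, x⟫_ℝ := by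
      have := hTS.inner_nonneg_left x
      rwa [ContinuousLinearMap.sub_apply] at this
    have h2 : ⟪T x, x⟫_ℝ ≤ ‖T‖ * ‖x‖ ^ 2 := by
      calc ⟪T x, x⟫_ℝ ≤ ‖T x‖ * ‖x‖ := real_inner_le_norm _ _
        _ ≤ (‖T‖ * ‖x‖) * ‖x‖ := mul_le_mul_of_nonneg_right (T.le_opNorm x) (norm_nonneg x)
        _ = ‖T‖ * ‖x‖ ^ 2 := by ring
    rw [inner_sub_left] at h1
    linarith
  refine ContinuousLinearMap.opNorm_le_bound _ (norm_nonneg T) fun x => ?_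
  rcases eq_or_ne (S x) 0 with h | h
  · rw [h, norm_zero]
    positivity
  · have hx : 0 < ‖S x‖ := norm_pos_iff.mpr h
    have c1 := hCS x (S x)
    have e : ⟪S x, S x⟫_ℝ = ‖S x‖ ^ 2 := real_inner_self_eq_norm_sq _
    have b1 := hq2 x
    have b2 := hq2 (S x)
    have hp1 := hpos x
    have hp2 := hpos (S x)
    have h4 : ‖S x‖ ^ 2 ≤ (‖T‖ * ‖x‖) ^ 2 := by
      nlinarith [norm_nonneg x, norm_nonneg (S x), norm_nonneg T, sq_nonneg (‖S x‖)]
    have h5 : 0 ≤ ‖T‖ * ‖x‖ := by positivity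
    exact (pow_le_pow_iff_left₀ (norm_nonneg _) h5 two_ne_zero).mp h4

lemma aux_key (v : Fin n → (Fin m → ℝ)) (t : ℝ) (ht : 0 ≤ t)
    (c : Fin n → ℝ) (hc0 : ∀ j, 0 ≤ c j) (hc1 : ∀ j, t * c j ≤ 1) :
    t * ‖Matrix.toEuclideanCLM (𝕜 := ℝ) ((n : ℝ)⁻¹ • ∑ j, c j • vecMulVec (v j) (v j))‖ ≤
      ‖Matrix.toEuclideanCLM (𝕜 := ℝ) ((n : ℝ)⁻¹ • ∑ j, vecMulVec (v j) (v j))‖ := by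
  have hn0 : (0:ℝ) ≤ (n : ℝ)⁻¹ := by positivity
  have hSmat : t • ((n : ℝ)⁻¹ • ∑ j, c j • vecMulVec (v j) (v j))
      = ∑ j, ((n : ℝ)⁻¹ * (t * c j)) • vecMulVec (v j) (v j) := by
    rw [Finset.smul_sum, Finset.smul_sum]
    refine Finset.sum_congr rfl fun j _ => ?_
    rw [smul_smul, smul_smul]
    congr 1
    ring
  have hSpos : (Matrix.toEuclideanCLM (𝕜 := ℝ)
      (∑ j, ((n : ℝ)⁻¹ * (t * c j)) • vecMulVec (v j) (v j))).IsPositive :=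
    aux_sum_pos v _ fun j => mul_nonneg hn0 (mul_nonneg ht (hc0 j))
  have hdiff : ((n : ℝ)⁻¹ • ∑ j, vecMulVec (v j) (v j))
      - (∑ j, ((n : ℝ)⁻¹ * (t * c j)) • vecMulVec (v j) (v j))
      = ∑ j, ((n : ℝ)⁻¹ * (1 - t * c j)) • vecMulVec (v j) (v j) := by
    rw [Finset.smul_sum, ← Finset.sum_sub_distrib]
    refine Finset.sum_congr rfl fun j _ => ?_
    rw [← sub_smul]
    congr 1
    ring
  have hTS : ((Matrix.toEuclideanCLM (𝕜 := ℝ) ((n : ℝ)⁻¹ • ∑ j, vecMulVec (v j) (v j)))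
      - Matrix.toEuclideanCLM (𝕜 := ℝ)
        (∑ j, ((n : ℝ)⁻¹ * (t * c j)) • vecMulVec (v j) (v j))).IsPositive := by
    rw [← map_sub, hdiff]
    exact aux_sum_pos v _ fun j => mul_nonneg hn0 (by linarith [hc1 j])
  have hle := aux_norm_le hSpos hTS
  have e2 : Matrix.toEuclideanCLM (𝕜 := ℝ)
      (∑ j, ((n : ℝ)⁻¹ * (t * c j)) • vecMulVec (v j) (v j))
      = t • Matrix.toEuclideanCLM (𝕜 := ℝ) ((n : ℝ)⁻¹ • ∑ j, c j • vecMulVec (v j) (v j)) := by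
    rw [← _root_.map_smul, hSmat]
  have e3 : ‖t • Matrix.toEuclideanCLM (𝕜 := ℝ) ((n : ℝ)⁻¹ • ∑ j, c j • vecMulVec (v j) (v j))‖
      = ‖t‖ * ‖Matrix.toEuclideanCLM (𝕜 := ℝ) ((n : ℝ)⁻¹ • ∑ j, c j • vecMulVec (v j) (v j))‖ :=
    norm_smul (β := EuclideanSpace ℝ (Fin m) →L[ℝ] EuclideanSpace ℝ (Fin m)) t _
  rw [e2, e3, Real.norm_eq_abs, abs_of_nonneg ht] at hle
  exact hle

end Aux

theorem stmt17 (c : ℝ) (hc : 0 < c) (p : ℕ → ℕ)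
    (hpn : Tendsto (fun n : ℕ => (p n : ℝ) / n) atTop (nhds c))
    (Ω : ℕ → Type) (mΩ : ∀ n, MeasurableSpace (Ω n))
    (P : ∀ n, Measure (Ω n)) (hprob : ∀ n, IsProbabilityMeasure (P n))
    (A : (n : ℕ) → Matrix (Fin (p n)) (Fin (p n)) ℝ)
    (z : (n : ℕ) → Fin n → Ω n → EuclideanSpace ℝ (Fin (p n)))
    (hmeas : ∀ n j, Measurable (z n j))
    (hnz : ∀ n j, ∀ᵐ ω ∂(P n), (A n).mulVec (z n j ω) ≠ 0)
    (ηr η0 : ℝ) (hη0 : 0 < η0) (hηr : 0 < ηr)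
    (hgap : ∃ δ > (0 : ℝ), ∀ᶠ n in atTop,
      η0 < (Matrix.trace (A n * (A n)ᵀ) / p n - δ) * ηr)
    -- tail bound for the Gaussian sample covariance matrix
    (hB0 : ∀ s > (0 : ℝ), Tendsto (fun n : ℕ => (n : ℝ) ^ s *
      ((P n) {ω | η0 < ‖Matrix.toEuclideanCLM (𝕜 := ℝ) ((n : ℝ)⁻¹ • ∑ j : Fin n,
        vecMulVec ((A n).mulVec (z n j ω)) ((A n).mulVec (z n j ω)))‖}).toReal)
      atTop (nhds 0))
    -- super-polynomial concentration of the radii ‖Az_j‖²/p around r₁ = tr T / p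
    (hconc : ∀ ε > (0 : ℝ), ∀ s > (0 : ℝ), Tendsto (fun n : ℕ => (n : ℝ) ^ s *
      ((P n) {ω | ∃ j : Fin n, ε < |(∑ i, ((A n).mulVec (z n j ω)) i ^ 2) / p n
        - Matrix.trace (A n * (A n)ᵀ) / p n|}).toReal) atTop (nhds 0)) :
    ∀ s > (0 : ℝ), Tendsto (fun n : ℕ => (n : ℝ) ^ s *
      ((P n) {ω | ηr < ‖Matrix.toEuclideanCLM (𝕜 := ℝ) ((n : ℝ)⁻¹ • ∑ j : Fin n,
        ((p n : ℝ) / ∑ i, ((A n).mulVec (z n j ω)) i ^ 2) •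
          vecMulVec ((A n).mulVec (z n j ω)) ((A n).mulVec (z n j ω)))‖}).toReal)
      atTop (nhds 0) := by
  intro s hs
  obtain ⟨δ, hδ, hev⟩ := hgap
  have h1 := hB0 s hs
  have h2 := hconc δ hδ s hs
  refine squeeze_zero' (Filter.Eventually.of_forall fun n => mul_nonneg (Real.rpow_nonneg (Nat.cast_nonneg n) s) ENNReal.toReal_nonneg) ?_
    (by simpa only [add_zero] using h1.add h2)
  filter_upwards [hev] with n hn
  haveI := hprob n
  set E := {ω | η0 < ‖Matrix.toEuclideanCLM (𝕜 := ℝ) ((n : ℝ)⁻¹ • ∑ j : Fin n,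
    vecMulVec ((A n).mulVec (z n j ω)) ((A n).mulVec (z n j ω)))‖} with hE
  set F := {ω | ∃ j : Fin n, δ < |(∑ i, ((A n).mulVec (z n j ω)) i ^ 2) / p n
    - Matrix.trace (A n * (A n)ᵀ) / p n|} with hF
  have hPt : (P n) {ω | ηr < ‖Matrix.toEuclideanCLM (𝕜 := ℝ) ((n : ℝ)⁻¹ • ∑ j : Fin n,
      ((p n : ℝ) / ∑ i, ((A n).mulVec (z n j ω)) i ^ 2) •
        vecMulVec ((A n).mulVec (z n j ω)) ((A n).mulVec (z n j ω)))‖} ≤ P n E + P n F := by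
    refine le_trans (measure_mono_ae ?_) (measure_union_le E F)
    have hG : ∀ᵐ ω ∂(P n), ∀ j, (A n).mulVec (z n j ω) ≠ 0 := ae_all_iff.mpr (hnz n)
    filter_upwards [hG] with ω hω
    intro hmem
    by_cases hFc : ∃ j : Fin n, δ < |(∑ i, ((A n).mulVec (z n j ω)) i ^ 2) / p n
        - Matrix.trace (A n * (A n)ᵀ) / p n|
    · exact Or.inr hFc
    · push_neg at hFc
      left
      show η0 < _
      set v : Fin n → (Fin (p n) → ℝ) := fun j => (A n).mulVec (z n j ω) with hv
      set r₁ : ℝ := Matrix.trace (A n * (A n)ᵀ) / p n with hr₁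
      have hvpos : ∀ j, 0 < ∑ i, v j i ^ 2 := by
        intro j
        obtain ⟨i, hi⟩ := Function.ne_iff.mp (hω j)
        exact Finset.sum_pos' (fun k _ => sq_nonneg _)
          ⟨i, Finset.mem_univ i, sq_pos_of_ne_zero hi⟩
      have ht : 0 < r₁ - δ := by nlinarith [hn, hη0, hηr]
      have hc0 : ∀ j, 0 ≤ (p n : ℝ) / ∑ i, v j i ^ 2 := fun j => by positivity
      have hc1 : ∀ j, (r₁ - δ) * ((p n : ℝ) / ∑ i, v j i ^ 2) ≤ 1 := by
        intro j
        have habs := abs_le.mp (hFc j)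
        have hle : r₁ - δ ≤ (∑ i, v j i ^ 2) / p n := by linarith [habs.1]
        have hkey : (r₁ - δ) * (p n : ℝ) ≤ ∑ i, v j i ^ 2 := by
          rcases Nat.eq_zero_or_pos (p n) with hp | hp
          · simpa [hp] using (hvpos j).le
          · have hp' : (0:ℝ) < p n := by exact_mod_cast hp
            exact (le_div_iff₀ hp').mp hle
        rw [← mul_div_assoc, div_le_one (hvpos j)]
        exact hkey
      have hkey := aux_key v (r₁ - δ) ht.le
        (fun j => (p n : ℝ) / ∑ i, v j i ^ 2) hc0 hc1
      calc η0 < (r₁ - δ) * ηr := hn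
        _ < (r₁ - δ) * ‖Matrix.toEuclideanCLM (𝕜 := ℝ) ((n : ℝ)⁻¹ • ∑ j : Fin n,
            ((p n : ℝ) / ∑ i, v j i ^ 2) • vecMulVec (v j) (v j))‖ :=
          mul_lt_mul_of_pos_left hmem ht
        _ ≤ _ := hkey
  have htr : ((P n) {ω | ηr < ‖Matrix.toEuclideanCLM (𝕜 := ℝ) ((n : ℝ)⁻¹ • ∑ j : Fin n,
      ((p n : ℝ) / ∑ i, ((A n).mulVec (z n j ω)) i ^ 2) •
        vecMulVec ((A n).mulVec (z n j ω)) ((A n).mulVec (z n j ω)))‖}).toReal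
      ≤ ((P n) E).toReal + ((P n) F).toReal := by
    have h3 : ((P n) E + (P n) F).toReal = ((P n) E).toReal + ((P n) F).toReal :=
      ENNReal.toReal_add (measure_ne_top _ _) (measure_ne_top _ _)
    rw [← h3]
    exact ENNReal.toReal_mono (ENNReal.add_ne_top.mpr ⟨measure_ne_top _ _, measure_ne_top _ _⟩) hPt
  calc (n : ℝ) ^ s * _ ≤ (n : ℝ) ^ s * (((P n) E).toReal + ((P n) F).toReal) :=
        mul_le_mul_of_nonneg_left htr (by positivity)
    _ = (n : ℝ) ^ s * ((P n) E).toReal + (n : ℝ) ^ s * ((P n) F).toReal := mul_add _ _ _
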